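/- Suppose c_j : ℝ → ℝ satisfy c_j' = (j+1) c_{j+1} + (u₀/c₀) Σ_{i=0}^j c_i c_{j−i}. Then for m ∈ {0,1} and n ≥ 1, (H^m_n)' = (2n−1+m) G^m_n + (2n−1+m) u₀ H^m_n. -/

import Mathlib

open Matrix Finset

namespace DerivHankelAux

variable {n : ℕ}

lemma fin_sum_ite_eq (f : Fin n → ℝ) (v : ℕ) :
    (∑ k : Fin n, if (k : ℕ) = v then f k else 0) = if h : v < n then f ⟨v, h⟩ else 0 := by
  split_ifs with h
  · rw [Finset.sum_eq_single (⟨v, h⟩ : Fin n)]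
    · simp
    · intro k _ hk
      exact if_neg fun hkv => hk (Fin.ext hkv)
    · simp
  · exact Finset.sum_eq_zero fun k _ => if_neg (by have := k.isLt; omega)

lemma hasDerivAt_det (A : ℝ → Matrix (Fin n) (Fin n) ℝ) (A' : Matrix (Fin n) (Fin n) ℝ) (t : ℝ)
    (h : ∀ i j, HasDerivAt (fun s => A s i j) (A' i j) t) :
    HasDerivAt (fun s => (A s).det)
      (∑ j, ((A t).updateCol j fun i => A' i j).det) t := by
  have hterm : ∀ σ : Equiv.Perm (Fin n),
      HasDerivAt (fun s => ∏ i, A s (σ i) i)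
        (∑ j, (∏ i ∈ Finset.univ.erase j, A t (σ i) i) * A' (σ j) j) t := by
    intro σ
    have := HasDerivAt.fun_finsetProd (u := (Finset.univ : Finset (Fin n)))
      (f := fun i s => A s (σ i) i) (f' := fun i => A' (σ i) i) (x := t)
      (fun i _ => h (σ i) i)
    simpa [smul_eq_mul] using this
  have main : HasDerivAt (fun s => (A s).det)
      (∑ σ : Equiv.Perm (Fin n), ((Equiv.Perm.sign σ : ℤ) : ℝ) *
        ∑ j, (∏ i ∈ Finset.univ.erase j, A t (σ i) i) * A' (σ j) j) t := by
    have hfun : (fun s => (A s).det)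
        = fun s => ∑ σ : Equiv.Perm (Fin n), ((Equiv.Perm.sign σ : ℤ) : ℝ) * ∏ i, A s (σ i) i := by
      funext s; exact Matrix.det_apply' (A s)
    rw [hfun]
    exact HasDerivAt.fun_sum fun σ _ => (hterm σ).const_mul _
  convert main using 1
  simp_rw [Finset.mul_sum]
  rw [Finset.sum_comm]
  refine Finset.sum_congr rfl fun j _ => ?_
  rw [Matrix.det_apply']
  refine Finset.sum_congr rfl fun σ _ => ?_
  congr 1
  rw [← Finset.mul_prod_erase _ _ (Finset.mem_univ j)]
  rw [Matrix.updateCol_self]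
  rw [mul_comm]
  congr 1
  refine Finset.prod_congr rfl fun i hi => ?_
  exact Matrix.updateCol_ne (Finset.ne_of_mem_erase hi)

lemma sum_cramer_diag (A M : Matrix (Fin n) (Fin n) ℝ) :
    ∑ j : Fin n, cramer A (fun i => M i j) j = (adjugate A * M).trace := by
  simp only [cramer_eq_adjugate_mulVec, Matrix.mulVec, dotProduct, Matrix.trace,
    Matrix.diag_apply, Matrix.mul_apply]

lemma sum_cramer_mul_left (A B : Matrix (Fin n) (Fin n) ℝ) :
    ∑ j : Fin n, cramer A (fun i => (B * A) i j) j = B.trace * A.det := by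
  rw [sum_cramer_diag, ← Matrix.mul_assoc, Matrix.trace_mul_comm, ← Matrix.mul_assoc,
    Matrix.mul_adjugate, Matrix.smul_mul, Matrix.one_mul, Matrix.trace_smul, smul_eq_mul, mul_comm]

lemma sum_cramer_mul_right (A B : Matrix (Fin n) (Fin n) ℝ) :
    ∑ j : Fin n, cramer A (fun i => (A * B) i j) j = B.trace * A.det := by
  rw [sum_cramer_diag, ← Matrix.mul_assoc, Matrix.adjugate_mul, Matrix.smul_mul, Matrix.one_mul,
    Matrix.trace_smul, smul_eq_mul, mul_comm]

lemma conv_split (f : ℕ → ℝ) (m : ℕ) (hm : m = 0 ∨ m = 1) (i j : ℕ) :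
    ((∑ k ∈ range (i+1), f (i-k) * f (k+j+m)) + ∑ k ∈ range (j+1), f (i+k+m) * f (j-k))
      = (∑ l ∈ range (i+j+m+1), f l * f (i+j+m-l)) + (if m = 0 then f i * f j else 0) := by
  have h1 : ∑ k ∈ range (i+1), f (i-k) * f (k+j+m)
      = ∑ l ∈ Ico (j+m) (i+j+m+1), f l * f (i+j+m-l) := by
    rw [Finset.sum_Ico_eq_sum_range]
    have hr : i+j+m+1-(j+m) = i+1 := by omega
    rw [hr]
    refine Finset.sum_congr rfl fun k hk => ?_
    have hk' : k ≤ i := by have := Finset.mem_range.mp hk; omega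
    have e1 : j+m+k = k+j+m := by omega
    have e2 : i+j+m-(k+j+m) = i-k := by omega
    rw [e1, e2, mul_comm]
  have h2 : ∑ k ∈ range (j+1), f (i+k+m) * f (j-k)
      = ∑ l ∈ range (j+1), f l * f (i+j+m-l) := by
    rw [← Finset.sum_range_reflect (fun l => f l * f (i+j+m-l)) (j+1)]
    refine Finset.sum_congr rfl fun k hk => ?_
    have hk' : k < j+1 := Finset.mem_range.mp hk
    have e1 : j+1-1-k = j-k := by omega
    have e2 : i+j+m-(j-k) = i+k+m := by omega
    rw [e1, e2, mul_comm]
  rw [h1, h2]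
  rcases hm with hm | hm <;> subst hm
  · simp only [Nat.add_zero, eq_self_iff_true, if_true]
    rw [Finset.sum_range_succ]
    have hij : i + j - j = i := by omega
    rw [hij, Finset.range_eq_Ico, Finset.range_eq_Ico,
      ← Finset.sum_Ico_consecutive (fun l => f l * f (i+j-l)) (Nat.zero_le j)
        (by omega : j ≤ i+j+1)]
    ring
  · rw [if_neg one_ne_zero, add_zero, Finset.range_eq_Ico, Finset.range_eq_Ico,
      ← Finset.sum_Ico_consecutive (fun l => f l * f (i+j+1-l)) (Nat.zero_le (j+1))
        (by omega : j+1 ≤ i+j+1+1)]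
    ring

end DerivHankelAux

open Matrix Finset DerivHankelAux


/-- Time-dependent Hankel determinant `H^m_n(t) = det(c_{i+j+m}(t))`. -/
noncomputable def Hf (c : ℕ → ℝ → ℝ) (m n : ℕ) (t : ℝ) : ℝ :=
  (Matrix.of fun i j : Fin n => c (i.val + j.val + m) t).det

/-- `G^m_n(t)`: the Hankel determinant `H^m_n(t)` with its last row shifted
forward by one index; by convention `G^m_0 = 0`. -/
noncomputable def Gf (c : ℕ → ℝ → ℝ) (m n : ℕ) (t : ℝ) : ℝ :=
  if n = 0 then 0 else
  (Matrix.of fun i j : Fin n =>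
    if i.val = n - 1 then c (m + n + j.val) t else c (i.val + j.val + m) t).det

/-- Under the Riccati system `c_j' = (j+1) c_{j+1} + (u₀/c₀) Σ_{i=0}^{j} c_i c_{j−i}`,
one has `(H^m_n)' = (2n−1+m) G^m_n + (2n−1+m) u₀ H^m_n` for `m ∈ {0,1}`, `n ≥ 1`. -/
theorem deriv_hankel_nonautonomous (c : ℕ → ℝ → ℝ) (u₀ : ℝ → ℝ)
    (hc0 : ∀ t, c 0 t ≠ 0)
    (hc : ∀ j t, HasDerivAt (c j)
      ((j + 1 : ℕ) * c (j + 1) t +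
        u₀ t / c 0 t * ∑ i ∈ Finset.range (j + 1), c i t * c (j - i) t) t)
    (m : ℕ) (hm : m = 0 ∨ m = 1) (n : ℕ) (hn : 1 ≤ n) (t : ℝ) :
    HasDerivAt (fun s => Hf c m n s)
      (((2 * n - 1 + m : ℕ) : ℝ) * Gf c m n t +
        ((2 * n - 1 + m : ℕ) : ℝ) * u₀ t * Hf c m n t) t := by
  have hn0 : n ≠ 0 := by omega
  set u : ℝ := u₀ t / c 0 t with hu
  set d : ℕ → ℝ := fun k => ((k + 1 : ℕ) : ℝ) * c (k + 1) t
      + u * ∑ l ∈ Finset.range (k + 1), c l t * c (k - l) t with hd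
  set A : Matrix (Fin n) (Fin n) ℝ := Matrix.of fun i j : Fin n => c (i.val + j.val + m) t with hA
  have hder : HasDerivAt (fun s => Hf c m n s)
      (∑ j : Fin n, (A.updateCol j fun i => d (i.val + j.val + m)).det) t :=
    hasDerivAt_det (fun s => Matrix.of fun i j : Fin n => c (i.val + j.val + m) s)
      (Matrix.of fun i j : Fin n => d (i.val + j.val + m)) t (fun i j => hc _ t)
  set lst : Fin n := ⟨n - 1, by omega⟩ with hlst
  set B₁ : Matrix (Fin n) (Fin n) ℝ :=
    Matrix.of fun i k : Fin n => if (k : ℕ) = i.val + 1 then (i.val : ℝ) else 0 with hB₁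
  set B₂ : Matrix (Fin n) (Fin n) ℝ :=
    Matrix.of fun k j : Fin n => if (k : ℕ) = j.val + 1 then ((j.val + m + 1 : ℕ) : ℝ) else 0 with hB₂
  set L : Matrix (Fin n) (Fin n) ℝ :=
    Matrix.of fun i k : Fin n => if (k : ℕ) ≤ i.val then c (i.val - k.val) t else 0 with hL
  -- entry computations
  have hB1A : ∀ i j : Fin n, (B₁ * A) i j
      = if h : i.val + 1 < n then (i.val : ℝ) * c (i.val + 1 + j.val + m) t else 0 := by
    intro i j
    rw [Matrix.mul_apply]
    have h1 : ∀ k : Fin n, B₁ i k * A k j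
        = if (k : ℕ) = i.val + 1 then (i.val : ℝ) * c (k.val + j.val + m) t else 0 := by
      intro k
      rw [hB₁, hA, Matrix.of_apply, Matrix.of_apply]
      by_cases hk : (k : ℕ) = i.val + 1
      · rw [if_pos hk, if_pos hk]
      · rw [if_neg hk, if_neg hk, zero_mul]
    rw [Finset.sum_congr rfl fun k _ => h1 k,
      fin_sum_ite_eq (fun k : Fin n => (i.val : ℝ) * c (k.val + j.val + m) t) (i.val + 1)]
  have hAB2 : ∀ i j : Fin n, (A * B₂) i j
      = if h : j.val + 1 < n then ((j.val + m + 1 : ℕ) : ℝ) * c (i.val + (j.val + 1) + m) t else 0 := by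
    intro i j
    rw [Matrix.mul_apply]
    have h1 : ∀ k : Fin n, A i k * B₂ k j
        = if (k : ℕ) = j.val + 1 then ((j.val + m + 1 : ℕ) : ℝ) * c (i.val + k.val + m) t else 0 := by
      intro k
      rw [hB₂, hA, Matrix.of_apply, Matrix.of_apply]
      by_cases hk : (k : ℕ) = j.val + 1
      · rw [if_pos hk, if_pos hk, mul_comm]
      · rw [if_neg hk, if_neg hk, mul_zero]
    rw [Finset.sum_congr rfl fun k _ => h1 k,
      fin_sum_ite_eq (fun k : Fin n => ((j.val + m + 1 : ℕ) : ℝ) * c (i.val + k.val + m) t) (j.val + 1)]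
  have hLA : ∀ i j : Fin n, (L * A) i j
      = ∑ k ∈ Finset.range (i.val + 1), c (i.val - k) t * c (k + j.val + m) t := by
    intro i j
    rw [Matrix.mul_apply]
    have h1 : ∀ k : Fin n, L i k * A k j
        = if (k : ℕ) ≤ i.val then c (i.val - k.val) t * c (k.val + j.val + m) t else 0 := by
      intro k
      rw [hL, hA, Matrix.of_apply, Matrix.of_apply]
      by_cases hk : (k : ℕ) ≤ i.val
      · rw [if_pos hk, if_pos hk]
      · rw [if_neg hk, if_neg hk, zero_mul]
    rw [Finset.sum_congr rfl fun k _ => h1 k,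
      Fin.sum_univ_eq_sum_range (fun k => if k ≤ i.val then c (i.val - k) t * c (k + j.val + m) t else 0) n,
      ← Finset.sum_subset (Finset.range_subset_range.mpr (by omega : i.val + 1 ≤ n))
        (fun x _ hx => if_neg (by simp at hx; omega))]
    exact Finset.sum_congr rfl fun k hk => if_pos (by simp at hk; omega)
  have hALt : ∀ i j : Fin n, (A * Lᵀ) i j
      = ∑ k ∈ Finset.range (j.val + 1), c (i.val + k + m) t * c (j.val - k) t := by
    intro i j
    rw [Matrix.mul_apply]
    have h1 : ∀ k : Fin n, A i k * Lᵀ k j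
        = if (k : ℕ) ≤ j.val then c (i.val + k.val + m) t * c (j.val - k.val) t else 0 := by
      intro k
      rw [Matrix.transpose_apply, hL, hA, Matrix.of_apply, Matrix.of_apply]
      by_cases hk : (k : ℕ) ≤ j.val
      · rw [if_pos hk, if_pos hk]
      · rw [if_neg hk, if_neg hk, mul_zero]
    rw [Finset.sum_congr rfl fun k _ => h1 k,
      Fin.sum_univ_eq_sum_range (fun k => if k ≤ j.val then c (i.val + k + m) t * c (j.val - k) t else 0) n,
      ← Finset.sum_subset (Finset.range_subset_range.mpr (by omega : j.val + 1 ≤ n))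
        (fun x _ hx => if_neg (by simp at hx; omega))]
    exact Finset.sum_congr rfl fun k hk => if_pos (by simp at hk; omega)
  -- traces
  have htrB1 : B₁.trace = 0 := by
    rw [Matrix.trace]
    apply Finset.sum_eq_zero
    intro i _
    rw [Matrix.diag_apply, hB₁, Matrix.of_apply]
    exact if_neg (by omega)
  have htrB2 : B₂.trace = 0 := by
    rw [Matrix.trace]
    apply Finset.sum_eq_zero
    intro i _
    rw [Matrix.diag_apply, hB₂, Matrix.of_apply]
    exact if_neg (by omega)
  have htrL : L.trace = (n : ℝ) * c 0 t := by
    rw [Matrix.trace]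
    have h1 : ∀ i : Fin n, L.diag i = c 0 t := by
      intro i
      rw [Matrix.diag_apply, hL, Matrix.of_apply, if_pos (le_refl _), Nat.sub_self]
    rw [Finset.sum_congr rfl fun i _ => h1 i, Finset.sum_const, Finset.card_univ,
      Fintype.card_fin, nsmul_eq_mul]
  -- G determinants
  have hGrow : (A.updateRow lst (fun j : Fin n => c (n + j.val + m) t)).det = Gf c m n t := by
    rw [Gf, if_neg hn0]
    congr 1
    ext i j
    rw [Matrix.updateRow_apply]
    by_cases hi : i = lst
    · rw [if_pos hi, Matrix.of_apply, if_pos (show (i : ℕ) = n - 1 by rw [hi, hlst])]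
      have h2 : n + (j : ℕ) + m = m + n + (j : ℕ) := by omega
      rw [h2]
    · rw [if_neg hi, Matrix.of_apply,
        if_neg (show ¬(i : ℕ) = n - 1 from fun h => hi (Fin.ext (by rw [h, hlst])))]
      simp [hA]
  have hGcol : (A.updateCol lst (fun i : Fin n => c (i.val + n + m) t)).det = Gf c m n t := by
    rw [← hGrow, ← Matrix.det_transpose (A.updateRow lst fun j : Fin n => c (n + j.val + m) t)]
    congr 1
    ext i j
    rw [Matrix.updateCol_apply, Matrix.transpose_apply, Matrix.updateRow_apply]
    by_cases hj : j = lst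
    · rw [if_pos hj, if_pos hj]
      have h2 : (i : ℕ) + n + m = n + (i : ℕ) + m := by omega
      rw [h2]
    · rw [if_neg hj, if_neg hj, hA]
      show c ((i : ℕ) + (j : ℕ) + m) t = c ((j : ℕ) + (i : ℕ) + m) t
      have h2 : (i : ℕ) + (j : ℕ) + m = (j : ℕ) + (i : ℕ) + m := by omega
      rw [h2]
  -- the three special column sums
  have hcr : ∀ j : Fin n, cramer A (Pi.single lst (1 : ℝ)) j = cramer Aᵀ (Pi.single j (1 : ℝ)) lst := by
    intro j
    rw [Matrix.cramer_transpose_apply, ← Matrix.adjugate_apply, Matrix.cramer_eq_adjugate_mulVec]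
    show (adjugate A *ᵥ Pi.single lst 1) j = adjugate A j lst
    simp [Matrix.mulVec, dotProduct, Pi.single_apply, mul_ite]
  have hT3 : ∑ j : Fin n, cramer A
        (fun i : Fin n => if (i : ℕ) = n - 1 then ((n - 1 : ℕ) : ℝ) * c (n + j.val + m) t else 0) j
      = ((n - 1 : ℕ) : ℝ) * Gf c m n t := by
    have hfun : ∀ j : Fin n,
        (fun i : Fin n => if (i : ℕ) = n - 1 then ((n - 1 : ℕ) : ℝ) * c (n + j.val + m) t else 0)
        = (((n - 1 : ℕ) : ℝ) * c (n + j.val + m) t) • (Pi.single lst (1 : ℝ) : Fin n → ℝ) := by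
      intro j
      funext i
      rw [Pi.smul_apply, Pi.single_apply, smul_eq_mul]
      by_cases hi : (i : ℕ) = n - 1
      · rw [if_pos hi, if_pos (Fin.ext (show (i : ℕ) = (lst : ℕ) by rw [hi, hlst])), mul_one]
      · rw [if_neg hi, if_neg (show ¬ i = lst from fun h => hi (by rw [h, hlst])), mul_zero]
    have hsum : ∑ j : Fin n, cramer A
          (fun i : Fin n => if (i : ℕ) = n - 1 then ((n - 1 : ℕ) : ℝ) * c (n + j.val + m) t else 0) j
        = ((n - 1 : ℕ) : ℝ) * ∑ j, c (n + j.val + m) t * cramer Aᵀ (Pi.single j (1 : ℝ)) lst := by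
      rw [Finset.mul_sum]
      refine Finset.sum_congr rfl fun j _ => ?_
      rw [hfun j, _root_.map_smul, Pi.smul_apply, smul_eq_mul, hcr j]
      ring
    rw [hsum]
    congr 1
    have hw : ∑ j, c (n + j.val + m) t * cramer Aᵀ (Pi.single j (1 : ℝ)) lst
        = cramer Aᵀ (fun j : Fin n => c (n + j.val + m) t) lst := by
      have hrep : (fun j : Fin n => c (n + j.val + m) t)
          = ∑ j : Fin n, c (n + j.val + m) t • (Pi.single j (1 : ℝ) : Fin n → ℝ) := by
        funext x
        rw [Finset.sum_apply]
        simp [Pi.single_apply]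
      rw [hrep, _root_.map_sum, Finset.sum_apply]
      refine Finset.sum_congr rfl fun j _ => ?_
      rw [_root_.map_smul, Pi.smul_apply, smul_eq_mul]
    rw [hw, Matrix.cramer_transpose_apply, hGrow]
  have hT4 : ∑ j : Fin n, cramer A
        (fun i : Fin n => if (j : ℕ) = n - 1 then ((n + m : ℕ) : ℝ) * c (i.val + n + m) t else 0) j
      = ((n + m : ℕ) : ℝ) * Gf c m n t := by
    rw [Finset.sum_eq_single lst]
    · have hfun : (fun i : Fin n => if (lst : ℕ) = n - 1 then ((n + m : ℕ) : ℝ) * c (i.val + n + m) t else 0)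
          = ((n + m : ℕ) : ℝ) • (fun i : Fin n => c (i.val + n + m) t) := by
        funext i
        rw [if_pos (show (lst : ℕ) = n - 1 by rw [hlst])]
        rfl
      rw [hfun, _root_.map_smul, Pi.smul_apply, smul_eq_mul, Matrix.cramer_apply, hGcol]
    · intro j _ hj
      have hfun : (fun i : Fin n => if (j : ℕ) = n - 1 then ((n + m : ℕ) : ℝ) * c (i.val + n + m) t else 0)
          = (0 : Fin n → ℝ) := by
        funext i
        rw [if_neg (show ¬(j : ℕ) = n - 1 from fun h => hj (Fin.ext (by rw [h, hlst])))]
        rfl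
      rw [hfun, _root_.map_zero]
      rfl
    · intro h
      exact absurd (Finset.mem_univ lst) h
  have hH : A.det = Hf c m n t := by rw [hA]; rfl
  have hT7 : ∑ j : Fin n, cramer A (fun i : Fin n => if m = 0 then c i.val t * c j.val t else 0) j
      = (if m = 0 then c 0 t * A.det else 0) := by
    by_cases hm0 : m = 0
    · simp only [if_pos hm0]
      subst hm0
      have hz : ∀ j : Fin n, (fun i : Fin n => c i.val t * c j.val t)
          = c j.val t • (fun i : Fin n => A i (⟨0, by omega⟩ : Fin n)) := by
        intro j
        funext i
        show c i.val t * c j.val t = c j.val t * A i ⟨0, by omega⟩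
        rw [mul_comm]
        rfl
      have hrow : cramer A (fun i : Fin n => A i (⟨0, by omega⟩ : Fin n))
          = Pi.single (⟨0, by omega⟩ : Fin n) A.det := by
        have h0 := Matrix.cramer_transpose_row_self Aᵀ (⟨0, by omega⟩ : Fin n)
        rw [Matrix.transpose_transpose, Matrix.det_transpose] at h0
        exact h0
      rw [Finset.sum_congr rfl fun j _ => by rw [hz j, _root_.map_smul, Pi.smul_apply, smul_eq_mul, hrow]]
      rw [Finset.sum_eq_single (⟨0, by omega⟩ : Fin n)]
      · rw [Pi.single_apply, if_pos rfl]
      · intro j _ hj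
        rw [Pi.single_apply, if_neg hj, mul_zero]
      · intro h
        exact absurd (Finset.mem_univ _) h
    · simp only [if_neg hm0]
      refine Finset.sum_eq_zero fun j _ => ?_
      exact congrFun (_root_.map_zero (cramer A)) j
  -- the column identity
  have hcol : ∀ j i : Fin n, d (i.val + j.val + m)
      = ((B₁ * A) i j + (A * B₂) i j
          + (if (i : ℕ) = n - 1 then ((n - 1 : ℕ) : ℝ) * c (n + j.val + m) t else 0)
          + (if (j : ℕ) = n - 1 then ((n + m : ℕ) : ℝ) * c (i.val + n + m) t else 0))
        + u * (((L * A) i j + (A * Lᵀ) i j) - (if m = 0 then c i.val t * c j.val t else 0)) := by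
    intro j i
    have hin := i.isLt
    have hjn := j.isLt
    rw [hB1A i j, hAB2 i j, hLA i j, hALt i j]
    simp only [hd]
    have hconv := conv_split (fun k => c k t) m hm i.val j.val
    have hS : (∑ l ∈ Finset.range (i.val + j.val + m + 1), c l t * c (i.val + j.val + m - l) t)
        = (∑ k ∈ Finset.range (i.val + 1), c (i.val - k) t * c (k + j.val + m) t)
          + (∑ k ∈ Finset.range (j.val + 1), c (i.val + k + m) t * c (j.val - k) t)
          - (if m = 0 then c i.val t * c j.val t else 0) := by
      linarith [hconv]
    rw [hS]
    congr 1
    by_cases hi : i.val + 1 < n <;> by_cases hj : j.val + 1 < n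
    · rw [dif_pos hi, dif_pos hj, if_neg (show ¬(i : ℕ) = n - 1 by omega),
        if_neg (show ¬(j : ℕ) = n - 1 by omega)]
      have e1 : i.val + 1 + j.val + m = i.val + j.val + m + 1 := by omega
      have e2 : i.val + (j.val + 1) + m = i.val + j.val + m + 1 := by omega
      rw [e1, e2]
      push_cast
      ring
    · rw [dif_pos hi, dif_neg hj, if_neg (show ¬(i : ℕ) = n - 1 by omega),
        if_pos (show (j : ℕ) = n - 1 by omega)]
      have e1 : i.val + 1 + j.val + m = i.val + j.val + m + 1 := by omega
      have e2 : i.val + n + m = i.val + j.val + m + 1 := by omega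
      have e3 : (n + m : ℕ) = j.val + 1 + m := by omega
      rw [e1, e2, e3]
      push_cast
      ring
    · rw [dif_neg hi, dif_pos hj, if_pos (show (i : ℕ) = n - 1 by omega),
        if_neg (show ¬(j : ℕ) = n - 1 by omega)]
      have e1 : i.val + (j.val + 1) + m = i.val + j.val + m + 1 := by omega
      have e2 : n + j.val + m = i.val + j.val + m + 1 := by omega
      have e3 : (n - 1 : ℕ) = i.val := by omega
      rw [e1, e2, e3]
      push_cast
      ring
    · rw [dif_neg hi, dif_neg hj, if_pos (show (i : ℕ) = n - 1 by omega),
        if_pos (show (j : ℕ) = n - 1 by omega)]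
      have e1 : n + j.val + m = i.val + j.val + m + 1 := by omega
      have e2 : i.val + n + m = i.val + j.val + m + 1 := by omega
      have e3 : (n - 1 : ℕ) = i.val := by omega
      have e4 : (n + m : ℕ) = j.val + 1 + m := by omega
      rw [e1, e2, e3, e4]
      push_cast
      ring
  -- assembly
  have key : (∑ j : Fin n, (A.updateCol j fun i => d (i.val + j.val + m)).det)
      = ((2 * n - 1 + m : ℕ) : ℝ) * Gf c m n t
        + ((2 * n - 1 + m : ℕ) : ℝ) * u₀ t * Hf c m n t := by
    calc (∑ j : Fin n, (A.updateCol j fun i => d (i.val + j.val + m)).det)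
        = ∑ j : Fin n, cramer A (fun i => d (i.val + j.val + m)) j :=
          Finset.sum_congr rfl fun j _ => (Matrix.cramer_apply A _ j).symm
      _ = ∑ j : Fin n, (cramer A (fun i => (B₁ * A) i j) j + cramer A (fun i => (A * B₂) i j) j
            + cramer A (fun i : Fin n => if (i : ℕ) = n - 1 then ((n - 1 : ℕ) : ℝ) * c (n + j.val + m) t else 0) j
            + cramer A (fun i : Fin n => if (j : ℕ) = n - 1 then ((n + m : ℕ) : ℝ) * c (i.val + n + m) t else 0) j
            + u * (cramer A (fun i => (L * A) i j) j + cramer A (fun i => (A * Lᵀ) i j) j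
                - cramer A (fun i : Fin n => if m = 0 then c i.val t * c j.val t else 0) j)) := by
          refine Finset.sum_congr rfl fun j _ => ?_
          have hfun : (fun i => d (i.val + j.val + m))
              = (fun i : Fin n => (B₁ * A) i j) + (fun i : Fin n => (A * B₂) i j)
                + (fun i : Fin n => if (i : ℕ) = n - 1 then ((n - 1 : ℕ) : ℝ) * c (n + j.val + m) t else 0)
                + (fun i : Fin n => if (j : ℕ) = n - 1 then ((n + m : ℕ) : ℝ) * c (i.val + n + m) t else 0)
                + u • ((fun i : Fin n => (L * A) i j) + (fun i : Fin n => (A * Lᵀ) i j)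
                    - (fun i : Fin n => if m = 0 then c i.val t * c j.val t else 0)) := by
            funext i
            simp only [Pi.add_apply, Pi.smul_apply, Pi.sub_apply, smul_eq_mul]
            exact hcol j i
          rw [hfun]
          simp only [_root_.map_add, _root_.map_smul, _root_.map_sub, Pi.add_apply, Pi.smul_apply, Pi.sub_apply,
            smul_eq_mul]
      _ = (∑ j : Fin n, cramer A (fun i => (B₁ * A) i j) j) + (∑ j : Fin n, cramer A (fun i => (A * B₂) i j) j)
            + (∑ j : Fin n, cramer A (fun i : Fin n => if (i : ℕ) = n - 1 then ((n - 1 : ℕ) : ℝ) * c (n + j.val + m) t else 0) j)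
            + (∑ j : Fin n, cramer A (fun i : Fin n => if (j : ℕ) = n - 1 then ((n + m : ℕ) : ℝ) * c (i.val + n + m) t else 0) j)
            + u * ((∑ j : Fin n, cramer A (fun i => (L * A) i j) j) + (∑ j : Fin n, cramer A (fun i => (A * Lᵀ) i j) j)
                - (∑ j : Fin n, cramer A (fun i : Fin n => if m = 0 then c i.val t * c j.val t else 0) j)) := by
          rw [Finset.sum_add_distrib, Finset.sum_add_distrib, Finset.sum_add_distrib,
            Finset.sum_add_distrib, ← Finset.mul_sum, Finset.sum_sub_distrib,
            Finset.sum_add_distrib]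
      _ = ((2 * n - 1 + m : ℕ) : ℝ) * Gf c m n t
            + ((2 * n - 1 + m : ℕ) : ℝ) * u₀ t * Hf c m n t := by
          rw [sum_cramer_mul_left A B₁, sum_cramer_mul_right A B₂, hT3, hT4,
            sum_cramer_mul_left A L, sum_cramer_mul_right A Lᵀ, Matrix.trace_transpose,
            htrB1, htrB2, htrL, hT7, hH, hu]
          rcases hm with hm' | hm' <;> subst hm'
          · rw [if_pos rfl]
            have e0 : (2 * n - 1 + 0 : ℕ) = 2 * n - 1 := by omega
            rw [Nat.cast_sub hn, e0, Nat.cast_sub (by omega : 1 ≤ 2 * n)]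
            push_cast
            field_simp [hc0 t]
            ring
          · rw [if_neg one_ne_zero]
            have h2n : 2 * n - 1 + 1 = 2 * n := by omega
            rw [h2n, Nat.cast_sub hn]
            push_cast
            field_simp [hc0 t]
            ring
  rw [← key]
  exact hder
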